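/- arXiv:1703.01654 — 3 statements merged into one kernel-verified Lean document; each statement's English description precedes it below -/
import Mathlib

section
/- Let S be the set of probability densities s on ℝ (with respect to Lebesgue measure λ) that are monotone on a half-line and vanish elsewhere, i.e. for some a ∈ ℝ, either s is nonincreasing on [a,+∞) and s = 0 on (−∞,a), or s is nondecreasing on (−∞,a] and s = 0 on (a,+∞). For d ≥ 1, let S_d be the set of densities in S that are constant on each element of some partition of ℝ into at most d+2 intervals. For M ≥ 0, let S(M) be the set of densities s ∈ S vanishing outside some compact interval I_s and satisfying λ(I_s)·[sup_{I_s} s − inf_{I_s} s] ≤ M. Then for every s ∈ S(M) and every d ≥ 1, the squared Hellinger distance from s to S_d satisfies inf_{t∈S_d} h²(s·λ, t·λ) ≤ min(M/(4d²), 1). -/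
set_option maxHeartbeats 1000000

open MeasureTheory

/-- `S`: the set of probability densities on `ℝ` (w.r.t. Lebesgue measure) that are
monotone on a half-line and vanish elsewhere. -/
def IsHalfLineMonotoneDensity (s : ℝ → ℝ) : Prop :=
  (∀ x, 0 ≤ s x) ∧ (∫ x : ℝ, s x = 1) ∧
  ∃ a : ℝ, (AntitoneOn s (Set.Ici a) ∧ ∀ x, x < a → s x = 0) ∨
    (MonotoneOn s (Set.Iic a) ∧ ∀ x, a < x → s x = 0)

/-- `S_d`: densities of `S` that are constant on each element of some partition of `ℝ`
into at most `d + 2` intervals. -/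
def MemSd (d : ℕ) (s : ℝ → ℝ) : Prop :=
  IsHalfLineMonotoneDensity s ∧
  ∃ (k : ℕ) (I : Fin k → Set ℝ), k ≤ d + 2 ∧
    (∀ j, (I j).OrdConnected) ∧
    (Pairwise fun i j => Disjoint (I i) (I j)) ∧
    (⋃ j, I j) = Set.univ ∧
    ∀ j, ∃ c : ℝ, ∀ x ∈ I j, s x = c

/-- `S(M)`: densities of `S` vanishing outside some compact interval `I_s = [a,b]` and
with `λ(I_s)·[sup_{I_s} s − inf_{I_s} s] ≤ M`. -/
def MemSM (M : ℝ) (s : ℝ → ℝ) : Prop :=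
  IsHalfLineMonotoneDensity s ∧
  ∃ a b : ℝ, a ≤ b ∧ (∀ x ∉ Set.Icc a b, s x = 0) ∧
    (b - a) * (sSup (s '' Set.Icc a b) - sInf (s '' Set.Icc a b)) ≤ M

/- ### Auxiliary lemmas -/

lemma piece_bound (f : ℝ → ℝ) (hf : Integrable f) (hnn : ∀ z, 0 ≤ f z)
    (p r : ℝ) (hpr : p < r) (cc CC : ℝ) (hcc : 0 ≤ cc)
    (hbd : ∀ z ∈ Set.Ioo p r, cc ≤ Real.sqrt (f z) ∧ Real.sqrt (f z) ≤ CC) :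
    (∫ z in Set.Ioo p r, (Real.sqrt (f z) -
        Real.sqrt ((∫ z in Set.Ioo p r, f z) / (r - p))) ^ 2)
      ≤ (r - p) * (CC - cc) ^ 2 / 2 ∧
    (∫ z in Set.Ioo p r, (Real.sqrt (f z) -
        Real.sqrt ((∫ z in Set.Ioo p r, f z) / (r - p))) ^ 2)
      ≤ 2 * ∫ z in Set.Ioo p r, f z := by
  have hJm : MeasurableSet (Set.Ioo p r) := measurableSet_Ioo
  have hlen : (0:ℝ) < r - p := by linarith
  have hJfin : volume (Set.Ioo p r) < ⊤ := by
    rw [Real.volume_Ioo]; exact ENNReal.ofReal_lt_top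
  have hvol : (volume (Set.Ioo p r)).toReal = r - p := by
    rw [Real.volume_Ioo, ENNReal.toReal_ofReal hlen.le]
  have hccCC : cc ≤ CC := by
    have hmem : (p + r) / 2 ∈ Set.Ioo p r := ⟨by linarith, by linarith⟩
    exact le_trans (hbd _ hmem).1 (hbd _ hmem).2
  set g : ℝ → ℝ := fun z => Real.sqrt (f z) with hg
  have hgm : AEMeasurable g volume := by
    exact Real.continuous_sqrt.measurable.comp_aemeasurable hf.aemeasurable
  have hfJ : IntegrableOn f (Set.Ioo p r) volume := hf.integrableOn
  have hgJ : IntegrableOn g (Set.Ioo p r) volume := by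
    apply Integrable.mono' (integrableOn_const (C := CC) hJfin.ne)
      (hgm.restrict.aestronglyMeasurable)
    filter_upwards [ae_restrict_mem hJm] with z hz
    rw [Real.norm_eq_abs, abs_of_nonneg (Real.sqrt_nonneg _)]
    exact (hbd z hz).2
  set A := ∫ z in Set.Ioo p r, f z with hA
  set B := ∫ z in Set.Ioo p r, g z with hB
  have hA0 : 0 ≤ A := setIntegral_nonneg hJm fun z _ => hnn z
  have hB0 : 0 ≤ B := setIntegral_nonneg hJm fun z _ => Real.sqrt_nonneg _
  have key : ∀ α : ℝ, (∫ z in Set.Ioo p r, (g z - α) ^ 2) = A - 2 * α * B + α ^ 2 * (r - p) := by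
    intro α
    have h1 : ∀ z ∈ Set.Ioo p r, (g z - α) ^ 2 = f z - 2 * α * g z + α ^ 2 := by
      intro z _
      have : g z ^ 2 = f z := Real.sq_sqrt (hnn z)
      nlinarith [this]
    have hsub : IntegrableOn (fun z => f z - 2 * α * g z) (Set.Ioo p r) volume :=
      hfJ.sub (hgJ.const_mul _)
    have hcst : IntegrableOn (fun _ : ℝ => α ^ 2) (Set.Ioo p r) volume :=
      integrableOn_const hJfin.ne
    rw [setIntegral_congr_fun hJm h1, integral_add hsub hcst,
      integral_sub hfJ (hgJ.const_mul _), integral_const_mul, setIntegral_const, measureReal_def, hvol,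
      smul_eq_mul]
    ring
  have sq_int : ∀ α : ℝ, IntegrableOn (fun z => (g z - α) ^ 2) (Set.Ioo p r) volume := by
    intro α
    have h1 : ∀ z ∈ Set.Ioo p r, f z - 2 * α * g z + α ^ 2 = (g z - α) ^ 2 := by
      intro z _
      have : g z ^ 2 = f z := Real.sq_sqrt (hnn z)
      nlinarith [this]
    have base : IntegrableOn (fun z => f z - 2 * α * g z + α ^ 2) (Set.Ioo p r) volume :=
      (hfJ.sub (hgJ.const_mul _)).add (integrableOn_const hJfin.ne)
    exact base.congr_fun h1 hJm
  have hBA : B ^ 2 ≤ A * (r - p) := by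
    have h1 : 0 ≤ A - 2 * (B / (r - p)) * B + (B / (r - p)) ^ 2 * (r - p) := by
      rw [← key (B / (r - p))]
      exact setIntegral_nonneg hJm fun z _ => sq_nonneg _
    set q := B / (r - p) with hq
    have hBq : B = q * (r - p) := by rw [hq]; field_simp
    nlinarith [h1, hlen, hBq, sq_nonneg q]
  have hmid : A - 2 * ((cc + CC) / 2) * B + ((cc + CC) / 2) ^ 2 * (r - p)
      ≤ (r - p) * ((CC - cc) / 2) ^ 2 := by
    rw [← key ((cc + CC) / 2)]
    have hle : ∀ z ∈ Set.Ioo p r, (g z - (cc + CC) / 2) ^ 2 ≤ ((CC - cc) / 2) ^ 2 := by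
      intro z hz
      have h1 := (hbd z hz).1
      have h2 := (hbd z hz).2
      nlinarith
    calc (∫ z in Set.Ioo p r, (g z - (cc + CC) / 2) ^ 2)
        ≤ ∫ _ in Set.Ioo p r, ((CC - cc) / 2) ^ 2 :=
          setIntegral_mono_on (sq_int _) (integrableOn_const hJfin.ne) hJm hle
      _ = (r - p) * ((CC - cc) / 2) ^ 2 := by rw [setIntegral_const, measureReal_def, hvol, smul_eq_mul]
  have hABmid : A * (r - p) - B ^ 2 ≤ (r - p) ^ 2 * (CC - cc) ^ 2 / 4 := by
    nlinarith [hmid, sq_nonneg (((cc + CC) / 2) * (r - p) - B), hlen]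
  have hm0 : 0 ≤ A / (r - p) := div_nonneg hA0 hlen.le
  have hval : (∫ z in Set.Ioo p r, (g z - Real.sqrt (A / (r - p))) ^ 2)
      = 2 * A - 2 * Real.sqrt (A / (r - p)) * B := by
    rw [key (Real.sqrt (A / (r - p))), Real.sq_sqrt hm0, div_mul_cancel₀ _ hlen.ne']
    ring
  have hsqm : B / (r - p) ≤ Real.sqrt (A / (r - p)) := by
    have h2 : (B / (r - p)) ^ 2 ≤ A / (r - p) := by
      rw [div_pow, div_le_div_iff₀ (by positivity) hlen]
      nlinarith [hBA, hlen]
    calc B / (r - p) = Real.sqrt ((B / (r - p)) ^ 2) := (Real.sqrt_sq (by positivity)).symm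
      _ ≤ _ := Real.sqrt_le_sqrt h2
  have hsB : B ^ 2 / (r - p) ≤ Real.sqrt (A / (r - p)) * B := by
    have h := mul_le_mul_of_nonneg_right hsqm hB0
    calc B ^ 2 / (r - p) = B / (r - p) * B := by ring
      _ ≤ _ := h
  constructor
  · rw [hval]
    have step1 : 2 * A - 2 * Real.sqrt (A / (r - p)) * B ≤ 2 * A - 2 * (B ^ 2 / (r - p)) := by
      linarith
    refine le_trans step1 ?_
    rw [show 2 * A - 2 * (B ^ 2 / (r - p)) = (2 * A * (r - p) - 2 * B ^ 2) / (r - p) from by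
      field_simp, div_le_iff₀ hlen]
    nlinarith [hABmid, hlen]
  · rw [hval]
    have := mul_nonneg (Real.sqrt_nonneg (A / (r - p))) hB0
    linarith

lemma sqrt_sub_sq_le (u v : ℝ) (hv : 0 ≤ v) (h : v ≤ u) :
    (Real.sqrt u - Real.sqrt v) ^ 2 ≤ u - v := by
  have h1 : Real.sqrt v ≤ Real.sqrt u := Real.sqrt_le_sqrt h
  have h2 : Real.sqrt v ^ 2 = v := Real.sq_sqrt hv
  have h3 : Real.sqrt u ^ 2 = u := Real.sq_sqrt (le_trans hv h)
  nlinarith [Real.sqrt_nonneg v, mul_le_mul_of_nonneg_left h1 (Real.sqrt_nonneg v)]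

lemma exists_piece (y : ℕ → ℝ) (hy : Monotone y) :
    ∀ (d : ℕ) (z : ℝ), y 0 ≤ z → z < y d → ∃ j, j < d ∧ y j ≤ z ∧ z < y (j + 1) := by
  intro d
  induction d with
  | zero => intro z h1 h2; exact absurd (lt_of_le_of_lt h1 h2) (lt_irrefl _)
  | succ n ih =>
    intro z h1 h2
    by_cases h : z < y n
    · obtain ⟨j, hj, hj1, hj2⟩ := ih z h1 h
      exact ⟨j, Nat.lt_succ_of_lt hj, hj1, hj2⟩
    · exact ⟨n, Nat.lt_succ_self n, not_lt.1 h, h2⟩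

lemma union_Ico (y : ℕ → ℝ) (hy : Monotone y) (d : ℕ) :
    (⋃ i ∈ Finset.range d, Set.Ico (y i) (y (i + 1))) = Set.Ico (y 0) (y d) := by
  ext z
  simp only [Set.mem_iUnion, Finset.mem_range, Set.mem_Ico, exists_prop]
  constructor
  · rintro ⟨i, hi, h1, h2⟩
    exact ⟨le_trans (hy (Nat.zero_le i)) h1, lt_of_lt_of_le h2 (hy hi)⟩
  · rintro ⟨h1, h2⟩
    obtain ⟨j, hj, hj1, hj2⟩ := exists_piece y hy d z h1 h2
    exact ⟨j, hj, hj1, hj2⟩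

lemma ae_eq_of_off_singleton (F G : ℝ → ℝ) (b : ℝ) (h : ∀ z, z ≠ b → F z = G z) :
    F =ᵐ[volume] G := by
  have hsub : {z : ℝ | ¬ F z = G z} ⊆ {b} := by
    intro z hz
    simp only [Set.mem_singleton_iff]
    by_contra hzb
    exact hz (h z hzb)
  exact (MeasureTheory.ae_iff).2 (measure_mono_null hsub Real.volume_singleton)

lemma integral_comp_neg' (f : ℝ → ℝ) : (∫ x : ℝ, f (-x)) = ∫ x : ℝ, f x := by
  have := MeasurePreserving.integral_comp (Measure.measurePreserving_neg (volume : Measure ℝ))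
    (Homeomorph.neg ℝ).measurableEmbedding f
  simpa using this

lemma MemSd_comp_neg (d : ℕ) (t : ℝ → ℝ) (h : MemSd d t) : MemSd d (fun x => t (-x)) := by
  obtain ⟨⟨hnn, hint, a, hdir⟩, k, I, hk, hoc, hdisj, huniv, hconst⟩ := h
  refine ⟨⟨fun x => hnn (-x), ?_, -a, ?_⟩, k, fun j => (fun x : ℝ => -x) ⁻¹' (I j), hk, ?_, ?_, ?_, ?_⟩
  · show (∫ x : ℝ, t (-x)) = 1
    rw [integral_comp_neg' t]; exact hint
  · rcases hdir with ⟨hanti, hzero⟩ | ⟨hmono, hzero⟩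
    · refine Or.inr ⟨?_, fun x hx => hzero (-x) (by linarith)⟩
      intro p hp q hq hpq
      exact hanti (show -q ∈ Set.Ici a by simp only [Set.mem_Ici]; linarith [Set.mem_Iic.1 hq])
        (show -p ∈ Set.Ici a by simp only [Set.mem_Ici]; linarith [Set.mem_Iic.1 hp])
        (by linarith)
    · refine Or.inl ⟨?_, fun x hx => hzero (-x) (by linarith)⟩
      intro p hp q hq hpq
      exact hmono (show -q ∈ Set.Iic a by simp only [Set.mem_Iic]; linarith [Set.mem_Ici.1 hq])
        (show -p ∈ Set.Iic a by simp only [Set.mem_Iic]; linarith [Set.mem_Ici.1 hp])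
        (by linarith)
  · intro j
    refine ⟨fun p hp q hq z hz => ?_⟩
    have : -z ∈ Set.Icc (-q) (-p) := ⟨by linarith [hz.2], by linarith [hz.1]⟩
    exact (hoc j).out' hq hp this
  · exact fun i j hij => (hdisj hij).preimage _
  · rw [← Set.preimage_iUnion, huniv, Set.preimage_univ]
  · intro j
    obtain ⟨cv, hcv⟩ := hconst j
    exact ⟨cv, fun x hx => hcv (-x) hx⟩

lemma main_antitone (M : ℝ) (s : ℝ → ℝ)
    (hnn : ∀ x, 0 ≤ s x) (hint : (∫ x : ℝ, s x) = 1)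
    (a0 : ℝ) (hanti : AntitoneOn s (Set.Ici a0)) (hzero : ∀ x, x < a0 → s x = 0)
    (a b : ℝ) (hab : a ≤ b) (hsupp : ∀ x ∉ Set.Icc a b, s x = 0)
    (hMb : (b - a) * (sSup (s '' Set.Icc a b) - sInf (s '' Set.Icc a b)) ≤ M)
    (d : ℕ) (hd : 1 ≤ d) :
    ∃ t, MemSd d t ∧ (1/2 : ℝ) * (∫ x : ℝ, (Real.sqrt (s x) - Real.sqrt (t x)) ^ 2)
      ≤ min (M / (4 * (d : ℝ) ^ 2)) 1 := by
  have hs_int : Integrable s volume := by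
    by_contra h
    rw [MeasureTheory.integral_undef h] at hint
    norm_num at hint
  have hcontr : (∀ x : ℝ, s x = 0) → False := by
    intro hz
    have : (∫ x : ℝ, s x) = 0 := by
      calc (∫ x : ℝ, s x) = ∫ _ : ℝ, (0:ℝ) := by congr 1; funext x; exact hz x
        _ = 0 := integral_zero _ _
    rw [this] at hint; norm_num at hint
  have ha0b : a0 ≤ b := by
    by_contra h
    push_neg at h
    refine hcontr fun x => ?_
    rcases lt_or_ge x a0 with hx | hx
    · exact hzero x hx
    · exact hsupp x (fun hc => absurd hc.2 (not_le.2 (lt_of_lt_of_le h hx)))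
  have haa0 : a ≤ a0 := by
    by_contra h
    push_neg at h
    have hsa0 : s a0 = 0 := hsupp a0 (fun hc => absurd hc.1 (not_le.2 h))
    refine hcontr fun x => ?_
    rcases lt_or_ge x a0 with hx | hx
    · exact hzero x hx
    · exact le_antisymm (hsa0 ▸ hanti Set.self_mem_Ici hx hx) (hnn x)
  have hgt_b : ∀ x, b < x → s x = 0 := fun x hx =>
    hsupp x (fun hc => absurd hc.2 (not_le.2 hx))
  have hub : ∀ x, s x ≤ s a0 := by
    intro x
    rcases lt_or_ge x a0 with hx | hx
    · rw [hzero x hx]; exact hnn a0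
    · exact hanti Set.self_mem_Ici hx hx
  have hsbsa : s b ≤ s a0 := hanti Set.self_mem_Ici ha0b ha0b
  have hM2 : (b - a0) * (s a0 - s b) ≤ M := by
    have hsup : s a0 ≤ sSup (s '' Set.Icc a b) :=
      le_csSup ⟨s a0, fun v ⟨x, _, hxv⟩ => hxv ▸ hub x⟩ ⟨a0, ⟨haa0, ha0b⟩, rfl⟩
    have hinf : sInf (s '' Set.Icc a b) ≤ s b :=
      csInf_le ⟨0, fun v ⟨x, _, hxv⟩ => hxv ▸ hnn x⟩ ⟨b, ⟨hab, le_refl b⟩, rfl⟩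
    have h2 : (b - a0) * (s a0 - s b) ≤ (b - a) * (sSup (s '' Set.Icc a b) - sInf (s '' Set.Icc a b)) :=
      mul_le_mul (by linarith) (by linarith) (by linarith) (by linarith)
    linarith
  have hd0 : (0:ℝ) < (d:ℝ) := by exact_mod_cast Nat.pos_of_ne_zero (by omega)
  set L := Real.sqrt (s a0) with hL
  set l0 := Real.sqrt (s b) with hl0
  set Δ := (L - l0) / d with hΔ
  have hl0L : l0 ≤ L := Real.sqrt_le_sqrt hsbsa
  have hΔ0 : 0 ≤ Δ := div_nonneg (by linarith) hd0.le
  set c : ℕ → ℝ := fun i => L - i * Δ with hc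
  have hc_mono : ∀ i j : ℕ, i ≤ j → c j ≤ c i := by
    intro i j hij
    have : (i:ℝ) ≤ (j:ℝ) := Nat.cast_le.2 hij
    simp only [hc]
    nlinarith [hΔ0]
  have hc0 : c 0 = L := by simp [hc]
  have hcd : c d = l0 := by
    have hdne : (d:ℝ) ≠ 0 := hd0.ne'
    simp only [hc, hΔ]
    field_simp
    ring
  have hc_nn : ∀ i, i ≤ d → 0 ≤ c i := by
    intro i hi
    calc (0:ℝ) ≤ l0 := Real.sqrt_nonneg _
      _ = c d := hcd.symm
      _ ≤ c i := hc_mono i d hi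
  have hstep : ∀ i : ℕ, c i - c (i + 1) = Δ := by
    intro i
    simp only [hc]
    push_cast
    ring
  set AA : ℕ → Set ℝ := fun i => {z | z ∈ Set.Icc a0 b ∧ Real.sqrt (s z) ≤ c i} with hAA
  have hbA : ∀ i, i ≤ d → b ∈ AA i := by
    intro i hi
    refine ⟨⟨ha0b, le_refl b⟩, ?_⟩
    calc Real.sqrt (s b) = c d := hcd.symm
      _ ≤ c i := hc_mono i d hi
  have hAne : ∀ i, i ≤ d → (AA i).Nonempty := fun i hi => ⟨b, hbA i hi⟩
  have hAbdd : ∀ i, BddBelow (AA i) := fun i => ⟨a0, fun z hz => hz.1.1⟩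
  set y : ℕ → ℝ := fun i => if i = 0 then a0 else if d ≤ i then b else sInf (AA i) with hy
  have hy0 : y 0 = a0 := by simp [hy]
  have hyd : y d = b := by
    have hne : d ≠ 0 := by omega
    simp [hy, hne]
  have hy_Icc : ∀ i, a0 ≤ y i ∧ y i ≤ b := by
    intro i
    by_cases h0 : i = 0
    · rw [h0, hy0]; exact ⟨le_refl _, ha0b⟩
    · by_cases hdi : d ≤ i
      · simp only [hy, if_neg h0, if_pos hdi]; exact ⟨ha0b, le_refl _⟩
      · simp only [hy, if_neg h0, if_neg hdi]
        exact ⟨le_csInf (hAne i (by omega)) fun z hz => hz.1.1,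
          csInf_le (hAbdd i) (hbA i (by omega))⟩
  have hy_mono : Monotone y := by
    apply monotone_nat_of_le_succ
    intro i
    by_cases h0 : i = 0
    · subst h0; rw [hy0]; exact (hy_Icc 1).1
    · by_cases hdi : d ≤ i
      · have h1 : d ≤ i + 1 := le_trans hdi (Nat.le_succ i)
        simp only [hy, if_neg h0, if_pos hdi, if_neg (show ¬ i + 1 = 0 by omega), if_pos h1]
        exact le_refl b
      · by_cases hdi1 : d ≤ i + 1
        · have hb1 : y (i + 1) = b := by
            simp only [hy, if_neg (show ¬ i + 1 = 0 by omega), if_pos hdi1]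
          rw [hb1]; exact (hy_Icc i).2
        · simp only [hy, if_neg h0, if_neg hdi, if_neg (show ¬ i + 1 = 0 by omega), if_neg hdi1]
          exact csInf_le_csInf (hAbdd i) (hAne (i+1) (by omega))
            (fun z hz => ⟨hz.1, le_trans hz.2 (hc_mono i (i+1) (Nat.le_succ i))⟩)
  have hup : ∀ i, i < d → ∀ z ∈ Set.Ioo (y i) (y (i+1)), Real.sqrt (s z) ≤ c i := by
    intro i hi z hz
    have hz1 : a0 ≤ z := le_trans (hy_Icc i).1 hz.1.le
    by_cases h0 : i = 0
    · subst h0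
      rw [hc0, hL]
      exact Real.sqrt_le_sqrt (hanti Set.self_mem_Ici hz1 hz1)
    · have hyi : y i = sInf (AA i) := by
        simp only [hy, if_neg h0, if_neg (show ¬ d ≤ i by omega)]
      have hlt : sInf (AA i) < z := hyi ▸ hz.1
      obtain ⟨w, hw, hwz⟩ := exists_lt_of_csInf_lt (hAne i hi.le) hlt
      have hsz : s z ≤ s w := hanti hw.1.1 hz1 hwz.le
      exact le_trans (Real.sqrt_le_sqrt hsz) hw.2
  have hlow : ∀ i, i < d → ∀ z ∈ Set.Ioo (y i) (y (i+1)), c (i+1) ≤ Real.sqrt (s z) := by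
    intro i hi z hz
    have hz1 : a0 ≤ z := le_trans (hy_Icc i).1 hz.1.le
    have hz2 : z ≤ b := le_trans hz.2.le (hy_Icc (i+1)).2
    by_cases hd1 : d ≤ i + 1
    · have hi1 : i + 1 = d := by omega
      rw [hi1, hcd, hl0]
      exact Real.sqrt_le_sqrt (hanti hz1 ha0b hz2)
    · have hyi1 : y (i+1) = sInf (AA (i+1)) := by
        simp only [hy, if_neg (show ¬ i + 1 = 0 by omega), if_neg hd1]
      have hznm : z ∉ AA (i+1) := fun hmem =>
        absurd (csInf_le (hAbdd (i+1)) hmem) (not_le.2 (hyi1 ▸ hz.2))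
      by_contra hcon
      push_neg at hcon
      exact hznm ⟨⟨hz1, hz2⟩, hcon.le⟩
  set AI : ℕ → ℝ := fun i => ∫ z in Set.Ioo (y i) (y (i+1)), s z with hAI
  set m : ℕ → ℝ := fun i => if y i < y (i+1) then AI i / (y (i+1) - y i) else s (y i) with hm
  have hAI_nn : ∀ i, 0 ≤ AI i := fun i =>
    setIntegral_nonneg measurableSet_Ioo fun z _ => hnn z
  have hfin_Ioo : ∀ i, volume (Set.Ioo (y i) (y (i+1))) < ⊤ := fun i => by
    rw [Real.volume_Ioo]; exact ENNReal.ofReal_lt_top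
  have hm_le : ∀ i, m i ≤ s (y i) := by
    intro i
    by_cases hlt : y i < y (i+1)
    · simp only [hm, if_pos hlt]
      rw [div_le_iff₀ (by linarith)]
      calc AI i ≤ ∫ _ in Set.Ioo (y i) (y (i+1)), s (y i) := by
            apply setIntegral_mono_on hs_int.integrableOn
              (integrableOn_const (hfin_Ioo i).ne) measurableSet_Ioo
            intro z hz
            exact hanti (hy_Icc i).1 (le_trans (hy_Icc i).1 hz.1.le) hz.1.le
        _ = s (y i) * (y (i+1) - y i) := by
            rw [setIntegral_const, measureReal_def, Real.volume_Ioo, ENNReal.toReal_ofReal (by linarith),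
              smul_eq_mul, mul_comm]
    · simp only [hm, if_neg hlt]
      exact le_refl _
  have hm_ge : ∀ i, s (y (i+1)) ≤ m i := by
    intro i
    by_cases hlt : y i < y (i+1)
    · simp only [hm, if_pos hlt]
      rw [le_div_iff₀ (by linarith)]
      calc s (y (i+1)) * (y (i+1) - y i)
          = ∫ _ in Set.Ioo (y i) (y (i+1)), s (y (i+1)) := by
            rw [setIntegral_const, measureReal_def, Real.volume_Ioo, ENNReal.toReal_ofReal (by linarith),
              smul_eq_mul, mul_comm]
        _ ≤ AI i := by
            apply setIntegral_mono_on (integrableOn_const (hfin_Ioo i).ne)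
              hs_int.integrableOn measurableSet_Ioo
            intro z hz
            exact hanti (le_trans (hy_Icc i).1 hz.1.le) (hy_Icc (i+1)).1 hz.2.le
    · have heq : y i = y (i+1) := le_antisymm (hy_mono (Nat.le_succ i)) (not_lt.1 hlt)
      simp only [hm, if_neg hlt]
      rw [← heq]
  have hm_nn : ∀ i, 0 ≤ m i := fun i => le_trans (hnn _) (hm_ge i)
  have hm_anti : ∀ i j, i ≤ j → m j ≤ m i := by
    intro i j hij
    rcases eq_or_lt_of_le hij with rfl | hlt
    · exact le_refl _
    · calc m j ≤ s (y j) := hm_le j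
        _ ≤ s (y (i+1)) := hanti (hy_Icc (i+1)).1 (hy_Icc j).1 (hy_mono hlt)
        _ ≤ m i := hm_ge i
  set t : ℝ → ℝ := fun z =>
    ∑ i ∈ Finset.range d, Set.indicator (Set.Ico (y i) (y (i+1))) (fun _ => m i) z with htdef
  have ht_zero_lt : ∀ z, z < a0 → t z = 0 := by
    intro z hz
    apply Finset.sum_eq_zero
    intro i _
    apply Set.indicator_of_notMem
    intro hmem
    exact absurd (le_trans (hy_Icc i).1 hmem.1) (not_le.2 hz)
  have ht_zero_ge : ∀ z, b ≤ z → t z = 0 := by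
    intro z hz
    apply Finset.sum_eq_zero
    intro i _
    apply Set.indicator_of_notMem
    intro hmem
    exact absurd (lt_of_lt_of_le hmem.2 (le_trans (hy_Icc (i+1)).2 hz)) (lt_irrefl z)
  have ht_nn : ∀ z, 0 ≤ t z := fun z =>
    Finset.sum_nonneg fun i _ => Set.indicator_nonneg (fun _ _ => hm_nn i) z
  have ht_val : ∀ i, i < d → ∀ z ∈ Set.Ico (y i) (y (i+1)), t z = m i := by
    intro i hi z hz
    have hstep2 : ∀ j ∈ Finset.range d, j ≠ i →
        Set.indicator (Set.Ico (y j) (y (j+1))) (fun _ => m j) z = 0 := by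
      intro j _ hji
      apply Set.indicator_of_notMem
      intro hmem
      rcases lt_or_gt_of_ne hji with h | h
      · have h1 : y (j+1) ≤ y i := hy_mono (Nat.succ_le_of_lt h)
        exact absurd hz.1 (not_le.2 (lt_of_lt_of_le hmem.2 h1))
      · have h1 : y (i+1) ≤ y j := hy_mono (Nat.succ_le_of_lt h)
        exact absurd hmem.1 (not_le.2 (lt_of_lt_of_le hz.2 h1))
    calc t z = Set.indicator (Set.Ico (y i) (y (i+1))) (fun _ => m i) z :=
          Finset.sum_eq_single_of_mem i (Finset.mem_range.2 hi) hstep2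
      _ = m i := Set.indicator_of_mem hz _
  have ht_meas : Measurable t :=
    Finset.measurable_sum _ fun i _ => Measurable.indicator measurable_const measurableSet_Ico
  have ht_anti : AntitoneOn t (Set.Ici a0) := by
    intro p hp q hq hpq
    by_cases hqb : b ≤ q
    · rw [ht_zero_ge q hqb]; exact ht_nn p
    · push_neg at hqb
      obtain ⟨j, hjd, hj1, hj2⟩ := exists_piece y hy_mono d q (by rw [hy0]; exact hq)
        (by rw [hyd]; exact hqb)
      obtain ⟨i, hid, hi1, hi2⟩ := exists_piece y hy_mono d p (by rw [hy0]; exact hp)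
        (by rw [hyd]; exact lt_of_le_of_lt hpq hqb)
      rw [ht_val i hid p ⟨hi1, hi2⟩, ht_val j hjd q ⟨hj1, hj2⟩]
      apply hm_anti
      by_contra h
      push_neg at h
      have := hy_mono (Nat.succ_le_of_lt h)
      linarith
  have hAI_zero : ∀ i, ¬ (y i < y (i+1)) → AI i = 0 := by
    intro i h
    have heq : y i = y (i+1) := le_antisymm (hy_mono (Nat.le_succ i)) (not_lt.1 h)
    simp only [hAI]
    rw [← heq, Set.Ioo_self]
    simp
  have ht_int_i : ∀ i, Integrable
      (Set.indicator (Set.Ico (y i) (y (i+1))) (fun _ => m i)) volume := fun i =>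
    (integrable_indicator_iff measurableSet_Ico).2 (integrableOn_const
      (by rw [Real.volume_Ico]; exact ENNReal.ofReal_ne_top))
  have ht_integral : (∫ z : ℝ, t z) = ∑ i ∈ Finset.range d, AI i := by
    rw [show (fun z => t z) = t from rfl, htdef]
    rw [integral_finset_sum _ (fun i _ => ht_int_i i)]
    apply Finset.sum_congr rfl
    intro i _
    rw [integral_indicator_const _ measurableSet_Ico, measureReal_def, Real.volume_Ico,
      ENNReal.toReal_ofReal (sub_nonneg.2 (hy_mono (Nat.le_succ i))), smul_eq_mul]
    by_cases hlt : y i < y (i+1)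
    · simp only [hm, if_pos hlt]
      rw [mul_comm, div_mul_cancel₀ _ (show y (i+1) - y i ≠ 0 by linarith)]
    · rw [hAI_zero i hlt]
      have heq : y i = y (i+1) := le_antisymm (hy_mono (Nat.le_succ i)) (not_lt.1 hlt)
      rw [← heq, sub_self, zero_mul]
  have hdisj : (↑(Finset.range d) : Set ℕ).Pairwise
      (Function.onFun Disjoint fun i => Set.Ico (y i) (y (i+1))) := by
    have haux : ∀ i j : ℕ, i < j →
        Disjoint (Set.Ico (y i) (y (i+1))) (Set.Ico (y j) (y (j+1))) := by
      intro i j h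
      refine Set.disjoint_left.2 fun z hzi hzj => ?_
      have h1 : y (i+1) ≤ y j := hy_mono (Nat.succ_le_of_lt h)
      exact absurd hzj.1 (not_le.2 (lt_of_lt_of_le hzi.2 h1))
    intro i _ j _ hij
    rcases lt_or_gt_of_ne hij with h | h
    · exact haux i j h
    · exact (haux j i h).symm
  have huni : (⋃ i ∈ Finset.range d, Set.Ico (y i) (y (i+1))) = Set.Ico a0 b := by
    rw [union_Ico y hy_mono d, hy0, hyd]
  have hsumAI : ∑ i ∈ Finset.range d, AI i = ∫ z in Set.Ico a0 b, s z := by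
    rw [← huni, integral_biUnion_finset (Finset.range d) (fun i _ => measurableSet_Ico) hdisj
      (fun i _ => hs_int.integrableOn)]
    apply Finset.sum_congr rfl
    intro i _
    exact integral_Ico_eq_integral_Ioo.symm
  have hIco_one : (∫ z in Set.Ico a0 b, s z) = 1 := by
    have hae : s =ᵐ[volume] Set.indicator (Set.Ico a0 b) s := by
      apply ae_eq_of_off_singleton
      intro z hz
      by_cases h1 : z ∈ Set.Ico a0 b
      · rw [Set.indicator_of_mem h1]
      · rw [Set.indicator_of_notMem h1]
        rw [Set.mem_Ico, not_and_or, not_le, not_lt] at h1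
        rcases h1 with h | h
        · exact hzero z h
        · exact hgt_b z (lt_of_le_of_ne h (Ne.symm hz))
    calc (∫ z in Set.Ico a0 b, s z)
        = ∫ z : ℝ, Set.indicator (Set.Ico a0 b) s z := (integral_indicator measurableSet_Ico).symm
      _ = ∫ z : ℝ, s z := (integral_congr_ae hae).symm
      _ = 1 := hint
  have ht_one : (∫ z : ℝ, t z) = 1 := by rw [ht_integral, hsumAI, hIco_one]
  -- the partition
  set I : Fin (d+2) → Set ℝ := fun j =>
    if j.val = 0 then Set.Iio a0 else if j.val = d + 1 then Set.Ici b
    else Set.Ico (y (j.val - 1)) (y j.val) with hI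
  have hmemSd : MemSd d t := by
    refine ⟨⟨ht_nn, ht_one, a0, Or.inl ⟨ht_anti, ht_zero_lt⟩⟩, d + 2, I, le_refl _, ?_, ?_, ?_, ?_⟩
    · intro j
      by_cases h0 : j.val = 0
      · simp only [hI, if_pos h0]; exact Set.ordConnected_Iio
      · by_cases hd1 : j.val = d + 1
        · simp only [hI, if_neg h0, if_pos hd1]; exact Set.ordConnected_Ici
        · simp only [hI, if_neg h0, if_neg hd1]; exact Set.ordConnected_Ico
    · have H1 : ∀ (j : Fin (d+2)), j.val ≤ d → ∀ z ∈ I j, z < y j.val := by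
        intro j hj z hz
        by_cases h0 : j.val = 0
        · simp only [hI, if_pos h0] at hz
          rw [h0, hy0]
          exact hz
        · have hd1 : ¬ j.val = d + 1 := by omega
          simp only [hI, if_neg h0, if_neg hd1] at hz
          exact hz.2
      have H2 : ∀ (j : Fin (d+2)), 1 ≤ j.val → ∀ z ∈ I j, y (j.val - 1) ≤ z := by
        intro j hj z hz
        by_cases hd1 : j.val = d + 1
        · simp only [hI, if_neg (show ¬ j.val = 0 by omega), if_pos hd1] at hz
          have h3 : y (j.val - 1) ≤ y d := hy_mono (by omega)
          rw [hyd] at h3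
          exact le_trans h3 hz
        · simp only [hI, if_neg (show ¬ j.val = 0 by omega), if_neg hd1] at hz
          exact hz.1
      have haux : ∀ i j : Fin (d+2), i < j → Disjoint (I i) (I j) := by
        intro i j hij
        refine Set.disjoint_left.2 fun z hzi hzj => ?_
        have hijv : i.val < j.val := hij
        have h1 := H1 i (by omega) z hzi
        have h2 := H2 j (by omega) z hzj
        have h3 : y i.val ≤ y (j.val - 1) := hy_mono (by omega)
        linarith
      intro i j hij
      rcases lt_or_gt_of_ne hij with h | h
      · exact haux i j h
      · exact (haux j i h).symm
    · ext z
      simp only [Set.mem_iUnion, Set.mem_univ, iff_true]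
      by_cases h1 : z < a0
      · refine ⟨⟨0, by omega⟩, ?_⟩
        simp only [hI, eq_self_iff_true, if_true]
        exact h1
      · push_neg at h1
        by_cases h2 : b ≤ z
        · refine ⟨⟨d + 1, by omega⟩, ?_⟩
          simp only [hI]
          rw [if_neg (show ¬ (d + 1) = 0 by omega)]
          simp only [eq_self_iff_true, if_true]
          exact h2
        · push_neg at h2
          obtain ⟨j, hjd, hj1, hj2⟩ := exists_piece y hy_mono d z (by rw [hy0]; exact h1)
            (by rw [hyd]; exact h2)
          refine ⟨⟨j + 1, by omega⟩, ?_⟩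
          simp only [hI]
          rw [if_neg (show ¬ (j + 1) = 0 by omega), if_neg (show ¬ (j + 1) = d + 1 by omega)]
          simp only [Nat.add_sub_cancel]
          exact ⟨hj1, hj2⟩
    · intro j
      by_cases h0 : j.val = 0
      · refine ⟨0, fun z hz => ?_⟩
        simp only [hI, if_pos h0] at hz
        exact ht_zero_lt z hz
      · by_cases hd1 : j.val = d + 1
        · refine ⟨0, fun z hz => ?_⟩
          simp only [hI, if_neg h0, if_pos hd1] at hz
          exact ht_zero_ge z hz
        · refine ⟨m (j.val - 1), fun z hz => ?_⟩
          simp only [hI, if_neg h0, if_neg hd1] at hz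
          have hj1 : j.val - 1 < d := by have := j.isLt; omega
          have hj2 : j.val - 1 + 1 = j.val := by omega
          exact ht_val (j.val - 1) hj1 z (by rw [hj2]; exact hz)
  -- Hellinger bound
  set G : ℝ → ℝ := fun z => (Real.sqrt (s z) - Real.sqrt (t z)) ^ 2 with hG
  have hG_nn : ∀ z, 0 ≤ G z := fun z => sq_nonneg _
  have hG_int_eq : (∫ z : ℝ, G z) = ∫ z in Set.Ico a0 b, G z := by
    have hGb : ∀ z, z ≠ b → G z = Set.indicator (Set.Ico a0 b) G z := by
      intro z hz
      by_cases h1 : z ∈ Set.Ico a0 b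
      · rw [Set.indicator_of_mem h1]
      · rw [Set.indicator_of_notMem h1]
        rw [Set.mem_Ico, not_and_or, not_le, not_lt] at h1
        rcases h1 with h | h
        · simp only [hG]
          rw [hzero z h, ht_zero_lt z h]
          simp
        · have hb2 : b < z := lt_of_le_of_ne h (Ne.symm hz)
          simp only [hG]
          rw [hgt_b z hb2, ht_zero_ge z h]
          simp
    rw [integral_congr_ae (ae_eq_of_off_singleton _ _ b hGb), integral_indicator measurableSet_Ico]
  have hsL : ∀ z, Real.sqrt (s z) ≤ L := fun z => Real.sqrt_le_sqrt (hub z)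
  have hG_int_piece : ∀ i, i < d → IntegrableOn G (Set.Ico (y i) (y (i+1))) volume := by
    intro i hi
    have h1 : AEMeasurable (fun z => Real.sqrt (s z)) volume := by
      exact Real.continuous_sqrt.measurable.comp_aemeasurable hs_int.aemeasurable
    have h2 : Measurable fun z => Real.sqrt (t z) := Real.continuous_sqrt.measurable.comp ht_meas
    have hGm : AEMeasurable G volume := (h1.sub h2.aemeasurable).pow_const 2
    apply Integrable.mono'
      (show IntegrableOn (fun _ : ℝ => (L + Real.sqrt (m i)) ^ 2) (Set.Ico (y i) (y (i+1))) volume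
        from integrableOn_const (by rw [Real.volume_Ico]; exact ENNReal.ofReal_ne_top))
      hGm.restrict.aestronglyMeasurable
    filter_upwards [ae_restrict_mem measurableSet_Ico] with z hz
    rw [Real.norm_eq_abs, abs_of_nonneg (hG_nn z)]
    have hz1 := hsL z
    have hz2 : t z = m i := ht_val i hi z hz
    simp only [hG]
    rw [hz2]
    nlinarith [Real.sqrt_nonneg (s z), Real.sqrt_nonneg (m i), hz1,
      Real.sqrt_nonneg (s a0)]
  have hsplit : (∫ z in Set.Ico a0 b, G z)
      = ∑ i ∈ Finset.range d, ∫ z in Set.Ico (y i) (y (i+1)), G z := by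
    rw [← huni, integral_biUnion_finset _ (fun i _ => measurableSet_Ico) hdisj
      (fun i hi => hG_int_piece i (Finset.mem_range.1 hi))]
  have hpiece : ∀ i, i < d →
      (∫ z in Set.Ico (y i) (y (i+1)), G z) ≤ (y (i+1) - y i) * Δ ^ 2 / 2 ∧
      (∫ z in Set.Ico (y i) (y (i+1)), G z) ≤ 2 * AI i := by
    intro i hi
    rw [integral_Ico_eq_integral_Ioo]
    have hcongr : (∫ z in Set.Ioo (y i) (y (i+1)), G z)
        = ∫ z in Set.Ioo (y i) (y (i+1)), (Real.sqrt (s z) - Real.sqrt (m i)) ^ 2 := by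
      apply setIntegral_congr_fun measurableSet_Ioo
      intro z hz
      simp only [hG]
      rw [ht_val i hi z (Set.Ioo_subset_Ico_self hz)]
    rw [hcongr]
    by_cases hlt : y i < y (i+1)
    · have hb := piece_bound s hs_int hnn (y i) (y (i+1)) hlt (c (i+1)) (c i)
        (hc_nn (i+1) (by omega)) (fun z hz => ⟨hlow i hi z hz, hup i hi z hz⟩)
      have hmi : m i = (∫ z in Set.Ioo (y i) (y (i+1)), s z) / (y (i+1) - y i) := by
        simp only [hm, if_pos hlt, hAI]
      rw [hmi]
      constructor
      · have h1 := hb.1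
        rw [hstep i] at h1
        exact h1
      · exact hb.2
    · have heq : y i = y (i+1) := le_antisymm (hy_mono (Nat.le_succ i)) (not_lt.1 hlt)
      have hempty : Set.Ioo (y i) (y (i+1)) = (∅ : Set ℝ) := by rw [← heq, Set.Ioo_self]
      rw [hempty]
      simp only [Measure.restrict_empty, integral_zero_measure]
      constructor
      · have hlen0 : (0:ℝ) ≤ y (i+1) - y i := sub_nonneg.2 (hy_mono (Nat.le_succ i))
        exact div_nonneg (mul_nonneg hlen0 (sq_nonneg Δ)) (by norm_num)
      · linarith [hAI_nn i]
  have hsum1 : (∫ z in Set.Ico a0 b, G z) ≤ (b - a0) * Δ ^ 2 / 2 := by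
    rw [hsplit]
    calc (∑ i ∈ Finset.range d, ∫ z in Set.Ico (y i) (y (i+1)), G z)
        ≤ ∑ i ∈ Finset.range d, (y (i+1) - y i) * Δ ^ 2 / 2 :=
          Finset.sum_le_sum fun i hi => (hpiece i (Finset.mem_range.1 hi)).1
      _ = (y d - y 0) * Δ ^ 2 / 2 := by
          rw [← Finset.sum_div, ← Finset.sum_mul, Finset.sum_range_sub]
      _ = (b - a0) * Δ ^ 2 / 2 := by rw [hy0, hyd]
  have hsum2 : (∫ z in Set.Ico a0 b, G z) ≤ 2 := by
    rw [hsplit]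
    calc (∑ i ∈ Finset.range d, ∫ z in Set.Ico (y i) (y (i+1)), G z)
        ≤ ∑ i ∈ Finset.range d, 2 * AI i :=
          Finset.sum_le_sum fun i hi => (hpiece i (Finset.mem_range.1 hi)).2
      _ = 2 * ∑ i ∈ Finset.range d, AI i := by rw [Finset.mul_sum]
      _ = 2 * ∫ z in Set.Ico a0 b, s z := by rw [hsumAI]
      _ = 2 := by rw [hIco_one]; norm_num
  refine ⟨t, hmemSd, ?_⟩
  have hgoal : (∫ x : ℝ, (Real.sqrt (s x) - Real.sqrt (t x)) ^ 2) = ∫ z : ℝ, G z := rfl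
  rw [hgoal, hG_int_eq]
  apply le_min
  · have h1 : (L - l0) ^ 2 ≤ s a0 - s b := by
      rw [hL, hl0]
      exact sqrt_sub_sq_le (s a0) (s b) (hnn b) hsbsa
    have hba0 : (0:ℝ) ≤ b - a0 := by linarith
    calc (1/2 : ℝ) * ∫ z in Set.Ico a0 b, G z
        ≤ (1/2 : ℝ) * ((b - a0) * Δ ^ 2 / 2) := by linarith [hsum1]
      _ = (b - a0) * (L - l0) ^ 2 / (4 * (d:ℝ) ^ 2) := by
          have hdne : (d:ℝ) ≠ 0 := hd0.ne'
          rw [hΔ, div_pow]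
          field_simp
          ring_nf
      _ ≤ M / (4 * (d:ℝ) ^ 2) := by
          apply div_le_div_of_nonneg_right ?_ (by positivity)
          calc (b - a0) * (L - l0) ^ 2 ≤ (b - a0) * (s a0 - s b) :=
                mul_le_mul_of_nonneg_left h1 hba0
            _ ≤ M := hM2
  · linarith [hsum2]

/-- For every `s ∈ S(M)` and every `d ≥ 1`, the squared Hellinger distance
from `s` to `S_d` is at most `min(M/(4d²), 1)`. -/
theorem hellinger_approximation_of_SM_by_Sd
    (M : ℝ) (hM : 0 ≤ M) (s : ℝ → ℝ) (hs : MemSM M s) (d : ℕ) (hd : 1 ≤ d) :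
    sInf {r : ℝ | ∃ t, MemSd d t ∧
        r = (1/2) * ∫ x : ℝ, (Real.sqrt (s x) - Real.sqrt (t x)) ^ 2} ≤
      min (M / (4 * (d : ℝ) ^ 2)) 1 := by
  obtain ⟨⟨hnn, hint, a0, hdir⟩, a, b, hab, hsupp, hMb⟩ := hs
  have hbdd : BddBelow {r : ℝ | ∃ t, MemSd d t ∧
      r = (1/2) * ∫ x : ℝ, (Real.sqrt (s x) - Real.sqrt (t x)) ^ 2} := by
    refine ⟨0, ?_⟩
    rintro r ⟨t, _, rfl⟩
    exact mul_nonneg (by norm_num) (integral_nonneg fun z => sq_nonneg _)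
  rcases hdir with ⟨hanti, hzero⟩ | ⟨hmono, hzero⟩
  · obtain ⟨t, htSd, hbound⟩ := main_antitone M s hnn hint a0 hanti hzero a b hab hsupp hMb d hd
    exact le_trans (csInf_le hbdd ⟨t, htSd, rfl⟩) hbound
  · set s' : ℝ → ℝ := fun x => s (-x) with hs'
    have hnn' : ∀ x, 0 ≤ s' x := fun x => hnn _
    have hint' : (∫ x : ℝ, s' x) = 1 := by
      show (∫ x : ℝ, s (-x)) = 1
      rw [integral_comp_neg' s]; exact hint
    have hanti' : AntitoneOn s' (Set.Ici (-a0)) := by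
      intro p hp q hq hpq
      exact hmono (show -q ∈ Set.Iic a0 by simp only [Set.mem_Iic]; linarith [Set.mem_Ici.1 hq])
        (show -p ∈ Set.Iic a0 by simp only [Set.mem_Iic]; linarith [Set.mem_Ici.1 hp])
        (by linarith)
    have hzero' : ∀ x, x < -a0 → s' x = 0 := fun x hx => hzero (-x) (by linarith)
    have hsupp' : ∀ x ∉ Set.Icc (-b) (-a), s' x = 0 := by
      intro x hx
      exact hsupp (-x) (fun hc => hx ⟨by linarith [hc.2], by linarith [hc.1]⟩)
    have himg : s' '' Set.Icc (-b) (-a) = s '' Set.Icc a b := by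
      ext v
      constructor
      · rintro ⟨x, hx, rfl⟩
        exact ⟨-x, ⟨by linarith [hx.2], by linarith [hx.1]⟩, rfl⟩
      · rintro ⟨x, hx, rfl⟩
        exact ⟨-x, ⟨by linarith [hx.2], by linarith [hx.1]⟩, by simp [hs']⟩
    have hMb' : (-a - -b) * (sSup (s' '' Set.Icc (-b) (-a)) - sInf (s' '' Set.Icc (-b) (-a))) ≤ M := by
      rw [himg, show (-a - -b : ℝ) = b - a from by ring]
      exact hMb
    obtain ⟨t', ht'Sd, hbound'⟩ := main_antitone M s' hnn' hint' (-a0) hanti' hzero'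
      (-b) (-a) (by linarith) hsupp' hMb' d hd
    have htSd : MemSd d (fun x => t' (-x)) := MemSd_comp_neg d t' ht'Sd
    refine le_trans (csInf_le hbdd ⟨(fun x => t' (-x)), htSd, rfl⟩) ?_
    have hval : (∫ x : ℝ, (Real.sqrt (s x) - Real.sqrt (t' (-x))) ^ 2)
        = ∫ x : ℝ, (Real.sqrt (s' x) - Real.sqrt (t' x)) ^ 2 := by
      rw [← integral_comp_neg' (fun x => (Real.sqrt (s' x) - Real.sqrt (t' x)) ^ 2)]
      congr 1
      funext x
      simp only [hs', neg_neg]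
    calc (1/2 : ℝ) * ∫ x : ℝ, (Real.sqrt (s x) - Real.sqrt ((fun x => t' (-x)) x)) ^ 2
        = (1/2 : ℝ) * ∫ x : ℝ, (Real.sqrt (s' x) - Real.sqrt (t' x)) ^ 2 := by
          rw [show (∫ x : ℝ, (Real.sqrt (s x) - Real.sqrt ((fun x => t' (-x)) x)) ^ 2)
            = ∫ x : ℝ, (Real.sqrt (s x) - Real.sqrt (t' (-x))) ^ 2 from rfl, hval]
      _ ≤ min (M / (4 * (d : ℝ) ^ 2)) 1 := hbound'
end

section
/- Let p_θ(x) = 1_{[θ,θ+1]}(x) be the density of the uniform law on [θ,θ+1], and let ψ : [0,+∞] → [−1,1] be any function with ψ(0) = −1, ψ(1) = 0 and ψ(+∞) = 1 (ratios computed with the conventions 0/0 = 1 and a/0 = +∞ for a > 0). Then for all θ, θ', x ∈ ℝ: ψ(√(p_{θ'}(x)/p_θ(x))) = 1_{[θ',θ'+1]}(x) − 1_{[θ,θ+1]}(x). Consequently, for any observations X₁,…,Xₙ, sup_{θ'∈ℝ} Σ_{i=1}^n ψ(√(p_{θ'}(X_i)/p_θ(X_i))) = [sup_{θ'∈ℝ}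 Σ_{i=1}^n 1_{[θ',θ'+1]}(X_i)] − Σ_{i=1}^n 1_{[θ,θ+1]}(X_i), so that the ρ-estimators on this model are exactly the maximizers of θ ↦ Σ_{i=1}^n 1_{[θ,θ+1]}(X_i). -/
open MeasureTheory ENNReal

/-- The density (in `[0,+∞]`) of the uniform law on `[θ, θ+1]`. -/
noncomputable def unifDens (θ x : ℝ) : ℝ≥0∞ :=
  Set.indicator (Set.Icc θ (θ + 1)) 1 x

open Classical in
/-- The ratio `p_{θ'}(x)/p_θ(x)` in `[0,+∞]`, with the conventions `0/0 = 1` and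
`a/0 = +∞` for `a > 0` (the latter being automatic in `ℝ≥0∞`). -/
noncomputable def unifRatio (θ' θ x : ℝ) : ℝ≥0∞ :=
  if unifDens θ' x = 0 ∧ unifDens θ x = 0 then 1 else unifDens θ' x / unifDens θ x

private lemma iSup_sub_const' {f : ℝ → ℝ} (hb : BddAbove (Set.range f)) (c : ℝ) :
    (⨆ x, (f x - c)) = (⨆ x, f x) - c := by
  have hb' : BddAbove (Set.range fun x => f x - c) := by
    obtain ⟨M, hM⟩ := hb
    exact ⟨M - c, by rintro y ⟨x, rfl⟩; exact sub_le_sub_right (hM ⟨x, rfl⟩) c⟩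
  apply le_antisymm
  · exact ciSup_le fun x => sub_le_sub_right (le_ciSup hb x) c
  · rw [sub_le_iff_le_add]
    refine ciSup_le fun x => ?_
    have := le_ciSup hb' x
    linarith

/-- For the uniform translation model `p_θ = 1_{[θ,θ+1]}` and any
`ψ : [0,+∞] → ℝ` with `ψ(0) = −1`, `ψ(1) = 0`, `ψ(+∞) = 1`, one has
`ψ(√(p_{θ'}(x)/p_θ(x))) = 1_{[θ',θ'+1]}(x) − 1_{[θ,θ+1]}(x)`; consequently
`sup_{θ'} ∑ᵢ ψ(√(p_{θ'}(Xᵢ)/p_θ(Xᵢ))) = [sup_{θ'} ∑ᵢ 1_{[θ',θ'+1]}(Xᵢ)] − ∑ᵢ 1_{[θ,θ+1]}(Xᵢ)`,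
and the ρ-estimators of this model are exactly the maximizers of
`θ ↦ ∑ᵢ 1_{[θ,θ+1]}(Xᵢ)`. -/
theorem rho_estimator_uniform_model_is_count_maximizer
    (ψ : ℝ≥0∞ → ℝ) (h0 : ψ 0 = -1) (h1 : ψ 1 = 0) (htop : ψ ⊤ = 1)
    (n : ℕ) (X : Fin n → ℝ) :
    (∀ θ θ' x : ℝ,
      ψ ((unifRatio θ' θ x) ^ ((1:ℝ)/2)) =
        Set.indicator (Set.Icc θ' (θ' + 1)) (1 : ℝ → ℝ) x
          - Set.indicator (Set.Icc θ (θ + 1)) (1 : ℝ → ℝ) x) ∧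
    (∀ θ : ℝ,
      (⨆ θ' : ℝ, ∑ i, ψ ((unifRatio θ' θ (X i)) ^ ((1:ℝ)/2))) =
        (⨆ θ' : ℝ, ∑ i, Set.indicator (Set.Icc θ' (θ' + 1)) (1 : ℝ → ℝ) (X i))
          - ∑ i, Set.indicator (Set.Icc θ (θ + 1)) (1 : ℝ → ℝ) (X i)) ∧
    ∀ θhat : ℝ,
      ((∀ θ : ℝ,
          (⨆ θ' : ℝ, ∑ i, ψ ((unifRatio θ' θhat (X i)) ^ ((1:ℝ)/2))) ≤
            ⨆ θ' : ℝ, ∑ i, ψ ((unifRatio θ' θ (X i)) ^ ((1:ℝ)/2))) ↔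
        ∀ θ : ℝ,
          ∑ i, Set.indicator (Set.Icc θ (θ + 1)) (1 : ℝ → ℝ) (X i) ≤
            ∑ i, Set.indicator (Set.Icc θhat (θhat + 1)) (1 : ℝ → ℝ) (X i)) := by
  have key : ∀ θ θ' x : ℝ,
      ψ ((unifRatio θ' θ x) ^ ((1:ℝ)/2)) =
        Set.indicator (Set.Icc θ' (θ' + 1)) (1 : ℝ → ℝ) x
          - Set.indicator (Set.Icc θ (θ + 1)) (1 : ℝ → ℝ) x := by
    intro θ θ' x
    have h12 : (0:ℝ) < 1/2 := by norm_num
    by_cases hx' : x ∈ Set.Icc θ' (θ' + 1) <;>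
      by_cases hx : x ∈ Set.Icc θ (θ + 1) <;>
        simp [unifRatio, unifDens, hx, hx', ENNReal.one_rpow,
          ENNReal.top_rpow_of_pos h12, ENNReal.zero_rpow_of_pos h12,
          ENNReal.div_zero, h0, h1, htop]
  set c : ℝ → ℝ := fun θ => ∑ i, Set.indicator (Set.Icc θ (θ + 1)) (1 : ℝ → ℝ) (X i) with hc
  have hb : BddAbove (Set.range c) := by
    refine ⟨n, ?_⟩
    rintro y ⟨θ, rfl⟩
    calc c θ ≤ ∑ _i : Fin n, (1:ℝ) := by
              refine Finset.sum_le_sum fun i _ => ?_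
              by_cases h : X i ∈ Set.Icc θ (θ + 1) <;> simp [h]
      _ = n := by simp
  have sup_eq : ∀ θ : ℝ,
      (⨆ θ' : ℝ, ∑ i, ψ ((unifRatio θ' θ (X i)) ^ ((1:ℝ)/2))) =
        (⨆ θ' : ℝ, c θ') - c θ := by
    intro θ
    have : ∀ θ' : ℝ, ∑ i, ψ ((unifRatio θ' θ (X i)) ^ ((1:ℝ)/2)) = c θ' - c θ := by
      intro θ'
      simp only [hc, key, Finset.sum_sub_distrib]
    simp only [this]
    exact iSup_sub_const' hb (c θ)
  refine ⟨key, sup_eq, fun θhat => ?_⟩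
  constructor
  · intro H θ
    have := H θ
    rw [sup_eq, sup_eq] at this
    linarith
  · intro H θ
    rw [sup_eq, sup_eq]
    have := H θ
    linarith
end

section
/- Let 0 ≤ α < 1/2, θ₀ ∈ ℝ, and let X₁,…,Xₙ be i.i.d. with law P_{α,θ₀} = (1−α)·𝒰([θ₀,θ₀+1]) + α·𝒰([100+θ₀,101+θ₀]), where 𝒰([a,b]) is the uniform law on [a,b]. Let θ̂ₙ be any random variable satisfying Σ_{i=1}^n 1_{[θ̂ₙ,θ̂ₙ+1]}(X_i) = sup_{θ∈ℝ} Σ_{i=1}^n 1_{[θ,θ+1]}(X_i). Then for every c with 0 < c < n, P_{α,θ₀}[|θ̂ₙ − θ₀| > c/n] ≤ exp[−n(1−2α)²/2] + 2·exp[−(1−α)c]. In particular this ρ-estimator of θ₀ converges at rate 1/n even though the uniform model {𝒰([θ,θ+1]), θ ∈ ℝ} is misspecified when α > 0. -/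
open MeasureTheory ENNReal

/-- The contaminated uniform law
`P_{α,θ} = (1−α)·𝒰([θ,θ+1]) + α·𝒰([100+θ,101+θ])`; since both intervals have length one,
each uniform law is the restriction of Lebesgue measure to the interval. -/
noncomputable def mixUnif (α θ : ℝ) : Measure ℝ :=
  ENNReal.ofReal (1 - α) • volume.restrict (Set.Icc θ (θ + 1))
    + ENNReal.ofReal α • volume.restrict (Set.Icc (100 + θ) (101 + θ))

lemma mixUnif_apply (α θ : ℝ) {A : Set ℝ} (hA : MeasurableSet A) :
    mixUnif α θ A = ENNReal.ofReal (1 - α) * volume (A ∩ Set.Icc θ (θ + 1))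
      + ENNReal.ofReal α * volume (A ∩ Set.Icc (100 + θ) (101 + θ)) := by
  simp [mixUnif, Measure.restrict_apply hA]

lemma mixUnif_prob {α : ℝ} (θ : ℝ) (h0 : 0 ≤ α) (h1 : α ≤ 1) :
    IsProbabilityMeasure (mixUnif α θ) := by
  constructor
  rw [mixUnif_apply α θ MeasurableSet.univ]
  simp only [Set.univ_inter, Real.volume_Icc]
  rw [show θ + 1 - θ = 1 by ring, show 101 + θ - (100 + θ) = 1 by ring]
  rw [ENNReal.ofReal_one, mul_one, mul_one, ← ENNReal.ofReal_add (by linarith) h0]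
  norm_num

/-- Product of one-variable functions integrates to product of integrals over `Measure.pi`. -/
lemma lintegral_pi_prod_pow {μ : Measure ℝ} [SigmaFinite μ] {f : ℝ → ℝ≥0∞}
    (hf : Measurable f) (n : ℕ) :
    ∫⁻ x, ∏ i, f (x i) ∂(Measure.pi fun _ : Fin n => μ) = (∫⁻ y, f y ∂μ) ^ n := by
  induction n with
  | zero => simp
  | succ n ih =>
    rw [((measurePreserving_piFinSuccAbove (fun _ : Fin (n + 1) => μ) 0).symm).lintegral_map_equiv
      (fun x => ∏ i, f (x i)) _]
    simp_rw [MeasurableEquiv.piFinSuccAbove_symm_apply, Fin.insertNthEquiv,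
      Fin.prod_univ_succ, Fin.insertNth_zero, Equiv.coe_fn_mk, Fin.cons_zero, Fin.cons_succ]
    have : ∫⁻ (a : ℝ × (Fin n → ℝ)), f a.1 * ∏ x : Fin n, f (cast rfl (a.2 x))
        ∂μ.prod (Measure.pi fun _ => μ)
        = (∫⁻ y, f y ∂μ) * ∫⁻ x, ∏ i, f (x i) ∂(Measure.pi fun _ : Fin n => μ) :=
      lintegral_prod_mul hf.aemeasurable
        (Finset.measurable_prod Finset.univ fun i _ => hf.comp (measurable_pi_apply i)).aemeasurable
    rw [this, ih, pow_succ, mul_comm]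

lemma mixUnif_Ico_compl {α θ t : ℝ} (h0 : 0 ≤ α) (h1 : α ≤ 1) (ht0 : 0 ≤ t) (ht1 : t ≤ 1) :
    mixUnif α θ (Set.Ico θ (θ + t))ᶜ = ENNReal.ofReal (1 - (1 - α) * t) := by
  rw [mixUnif_apply α θ measurableSet_Ico.compl]
  have e1 : (Set.Ico θ (θ + t))ᶜ ∩ Set.Icc θ (θ + 1) = Set.Icc (θ + t) (θ + 1) := by
    ext y
    simp only [Set.mem_inter_iff, Set.mem_compl_iff, Set.mem_Ico, Set.mem_Icc, not_and, not_lt]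
    constructor
    · rintro ⟨hc, h2, h3⟩; exact ⟨hc h2, h3⟩
    · rintro ⟨h2, h3⟩; exact ⟨fun _ => h2, by linarith, h3⟩
  have e2 : (Set.Ico θ (θ + t))ᶜ ∩ Set.Icc (100 + θ) (101 + θ) = Set.Icc (100 + θ) (101 + θ) := by
    apply Set.inter_eq_self_of_subset_right
    intro y hy
    simp only [Set.mem_Icc] at hy
    simp only [Set.mem_compl_iff, Set.mem_Ico, not_and, not_lt]
    intro _; linarith [hy.1]
  rw [e1, e2]
  simp only [Real.volume_Icc]
  rw [show θ + 1 - (θ + t) = 1 - t by ring, show 101 + θ - (100 + θ) = 1 by ring,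
    ENNReal.ofReal_one, mul_one, ← ENNReal.ofReal_mul (by linarith),
    ← ENNReal.ofReal_add (by nlinarith) h0]
  congr 1; ring

lemma mixUnif_Ioc_compl {α θ t : ℝ} (h0 : 0 ≤ α) (h1 : α ≤ 1) (ht0 : 0 ≤ t) (ht1 : t ≤ 1) :
    mixUnif α θ (Set.Ioc (θ + 1 - t) (θ + 1))ᶜ = ENNReal.ofReal (1 - (1 - α) * t) := by
  rw [mixUnif_apply α θ measurableSet_Ioc.compl]
  have e1 : (Set.Ioc (θ + 1 - t) (θ + 1))ᶜ ∩ Set.Icc θ (θ + 1) = Set.Icc θ (θ + 1 - t) := by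
    ext y
    simp only [Set.mem_inter_iff, Set.mem_compl_iff, Set.mem_Ioc, Set.mem_Icc, not_and, not_le]
    constructor
    · rintro ⟨hc, h2, h3⟩
      refine ⟨h2, ?_⟩
      by_contra hy
      push_neg at hy
      exact absurd h3 (not_le.mpr (hc hy))
    · rintro ⟨h2, h3⟩
      exact ⟨fun h => by linarith, h2, by linarith⟩
  have e2 : (Set.Ioc (θ + 1 - t) (θ + 1))ᶜ ∩ Set.Icc (100 + θ) (101 + θ)
      = Set.Icc (100 + θ) (101 + θ) := by
    apply Set.inter_eq_self_of_subset_right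
    intro y hy
    simp only [Set.mem_Icc] at hy
    simp only [Set.mem_compl_iff, Set.mem_Ioc, not_and, not_le]
    intro _; linarith [hy.1]
  rw [e1, e2]
  simp only [Real.volume_Icc]
  rw [show θ + 1 - t - θ = 1 - t by ring, show 101 + θ - (100 + θ) = 1 by ring,
    ENNReal.ofReal_one, mul_one, ← ENNReal.ofReal_mul (by linarith),
    ← ENNReal.ofReal_add (by nlinarith) h0]
  congr 1; ring

lemma mixUnif_Icc (α θ : ℝ) (h0 : 0 ≤ α) :
    mixUnif α θ (Set.Icc θ (θ + 1)) = ENNReal.ofReal (1 - α) := by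
  rw [mixUnif_apply α θ measurableSet_Icc]
  have e1 : Set.Icc θ (θ + 1) ∩ Set.Icc θ (θ + 1) = Set.Icc θ (θ + 1) := Set.inter_self _
  have e2 : Set.Icc θ (θ + 1) ∩ Set.Icc (100 + θ) (101 + θ) = ∅ := by
    ext y
    simp only [Set.mem_inter_iff, Set.mem_Icc, Set.mem_empty_iff_false, iff_false, not_and, and_imp]
    intro _ h2 h3; linarith
  rw [e1, e2]
  simp only [Real.volume_Icc, measure_empty, mul_zero, add_zero]
  rw [show θ + 1 - θ = 1 by ring, ENNReal.ofReal_one, mul_one]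

lemma mixUnif_Icc_compl (α θ : ℝ) (h1 : α ≤ 1) :
    mixUnif α θ (Set.Icc θ (θ + 1))ᶜ = ENNReal.ofReal α := by
  rw [mixUnif_apply α θ measurableSet_Icc.compl]
  have e1 : (Set.Icc θ (θ + 1))ᶜ ∩ Set.Icc θ (θ + 1) = ∅ := Set.compl_inter_self _
  have e2 : (Set.Icc θ (θ + 1))ᶜ ∩ Set.Icc (100 + θ) (101 + θ)
      = Set.Icc (100 + θ) (101 + θ) := by
    apply Set.inter_eq_self_of_subset_right
    intro y hy
    simp only [Set.mem_Icc] at hy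
    simp only [Set.mem_compl_iff, Set.mem_Icc, not_and, not_le]
    intro _; linarith [hy.1]
  rw [e1, e2]
  simp only [Real.volume_Icc, measure_empty, mul_zero, zero_add]
  rw [show 101 + θ - (100 + θ) = 1 by ring, ENNReal.ofReal_one, mul_one]

lemma mixUnif_union (α θ : ℝ) (h0 : 0 ≤ α) (h1 : α ≤ 1) :
    mixUnif α θ (Set.Icc θ (θ + 1) ∪ Set.Icc (100 + θ) (101 + θ)) = 1 := by
  rw [mixUnif_apply α θ (measurableSet_Icc.union measurableSet_Icc)]
  have e1 : (Set.Icc θ (θ + 1) ∪ Set.Icc (100 + θ) (101 + θ)) ∩ Set.Icc θ (θ + 1)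
      = Set.Icc θ (θ + 1) := Set.inter_eq_self_of_subset_right Set.subset_union_left
  have e2 : (Set.Icc θ (θ + 1) ∪ Set.Icc (100 + θ) (101 + θ)) ∩ Set.Icc (100 + θ) (101 + θ)
      = Set.Icc (100 + θ) (101 + θ) := Set.inter_eq_self_of_subset_right Set.subset_union_right
  rw [e1, e2]
  simp only [Real.volume_Icc]
  rw [show θ + 1 - θ = 1 by ring, show 101 + θ - (100 + θ) = 1 by ring,
    ENNReal.ofReal_one, mul_one, mul_one, ← ENNReal.ofReal_add (by linarith) h0]
  norm_num

/-- For i.i.d. observations from `P_{α,θ₀}` with `0 ≤ α < 1/2`, any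
ρ-estimator `θ̂ₙ` on the uniform model, i.e. any maximizer of
`θ ↦ ∑ᵢ 1_{[θ,θ+1]}(Xᵢ)`, satisfies for `0 < c < n`:
`P[|θ̂ₙ − θ₀| > c/n] ≤ exp(−n(1−2α)²/2) + 2 exp(−(1−α)c)`. -/
theorem rho_estimator_contaminated_uniform_deviation
    (α θ₀ : ℝ) (hα0 : 0 ≤ α) (hα1 : α < 1/2) (n : ℕ)
    (that : (Fin n → ℝ) → ℝ) (hmeas : Measurable that)
    (hmax : ∀ x : Fin n → ℝ,
      (∑ i, Set.indicator (Set.Icc (that x) (that x + 1)) (1 : ℝ → ℝ) (x i)) =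
        ⨆ θ : ℝ, ∑ i, Set.indicator (Set.Icc θ (θ + 1)) (1 : ℝ → ℝ) (x i))
    (c : ℝ) (hc0 : 0 < c) (hcn : c < n) :
    (Measure.pi fun _ : Fin n => mixUnif α θ₀) {x | c / n < |that x - θ₀|} ≤
      ENNReal.ofReal (Real.exp (-(n * (1 - 2*α) ^ 2) / 2)
        + 2 * Real.exp (-((1 - α) * c))) := by
  classical
  have hn0 : (0:ℝ) < n := lt_trans hc0 hcn
  have hnne : (n:ℝ) ≠ 0 := ne_of_gt hn0
  have hα1' : α ≤ 1 := by linarith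
  set t : ℝ := c / n with ht_def
  have ht0 : 0 < t := div_pos hc0 hn0
  have ht1 : t < 1 := (div_lt_one hn0).mpr hcn
  have htn : t * n = c := div_mul_cancel₀ c hnne
  set μ := mixUnif α θ₀ with hμ_def
  haveI : IsProbabilityMeasure μ := mixUnif_prob θ₀ hα0 hα1'
  set P := Measure.pi fun _ : Fin n => μ with hP_def
  set I₁ := Set.Icc θ₀ (θ₀ + 1) with hI₁
  set I₂ := Set.Icc (100 + θ₀) (101 + θ₀) with hI₂
  set A₂ := Set.Ico θ₀ (θ₀ + t) with hA₂
  set A₃ := Set.Ioc (θ₀ + 1 - t) (θ₀ + 1) with hA₃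
  set S := I₁ ∪ I₂ with hS
  -- the count function
  set N : (Fin n → ℝ) → Set ℝ → ℝ := fun x B => ∑ i, Set.indicator B (1 : ℝ → ℝ) (x i)
    with hN_def
  -- events
  set E1 := {x : Fin n → ℝ | (n:ℝ) ≤ 2 * N x I₁ᶜ} with hE1
  set E2 := Set.pi Set.univ (fun _ : Fin n => A₂ᶜ) with hE2
  set E3 := Set.pi Set.univ (fun _ : Fin n => A₃ᶜ) with hE3
  set Ω₀ := Set.pi Set.univ (fun _ : Fin n => S) with hΩ₀
  -- pointwise indicator facts
  have hind : ∀ (B : Set ℝ) (y : ℝ),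
      Set.indicator B (1 : ℝ → ℝ) y = if y ∈ B then 1 else 0 := fun B y => rfl
  have hind_nonneg : ∀ (B : Set ℝ) (y : ℝ), 0 ≤ Set.indicator B (1 : ℝ → ℝ) y := by
    intro B y; rw [hind]; split_ifs <;> norm_num
  have hmono : ∀ (B B' : Set ℝ) (y : ℝ), (y ∈ B → y ∈ B') →
      Set.indicator B (1 : ℝ → ℝ) y ≤ Set.indicator B' (1 : ℝ → ℝ) y := by
    intro B B' y h
    rw [hind, hind]
    split_ifs with h1 h2 <;> first | exact le_rfl | exact absurd (h h1) h2 | norm_num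
  -- superadditivity of indicators over disjoint subsets
  have hadd : ∀ (B C D : Set ℝ) (y : ℝ), (y ∈ B → y ∈ D) → (y ∈ C → y ∈ D) →
      (y ∈ B → y ∈ C → False) →
      Set.indicator B (1 : ℝ → ℝ) y + Set.indicator C (1 : ℝ → ℝ) y
        ≤ Set.indicator D (1 : ℝ → ℝ) y := by
    intro B C D y hBD hCD hBC
    rw [hind, hind, hind]
    split_ifs with h1 h2 h3 <;> first
      | exact absurd (hBD h1) (by assumption)
      | exact absurd (hCD h2) (by assumption)
      | exact absurd (hCD (by assumption)) (by assumption)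
      | exact absurd (hBC h1 h2) not_false
      | norm_num
  -- the key deterministic inclusion
  have key : {x : Fin n → ℝ | t < |that x - θ₀|} ∩ Ω₀ ⊆ E1 ∪ (E2 ∪ E3) := by
    rintro x ⟨hx, hxΩ⟩
    have hΩ : ∀ i, x i ∈ S := fun i => hxΩ i (Set.mem_univ i)
    have hNle : ∀ θ : ℝ, (∑ i, Set.indicator (Set.Icc θ (θ + 1)) (1 : ℝ → ℝ) (x i)) ≤ (n:ℝ) := by
      intro θ
      calc (∑ i, Set.indicator (Set.Icc θ (θ + 1)) (1 : ℝ → ℝ) (x i))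
          ≤ ∑ _i : Fin n, (1:ℝ) := by
            apply Finset.sum_le_sum
            intro i _
            rw [hind]; split_ifs <;> norm_num
        _ = (n:ℝ) := by simp
    have hsup : (∑ i, Set.indicator I₁ (1 : ℝ → ℝ) (x i))
        ≤ ∑ i, Set.indicator (Set.Icc (that x) (that x + 1)) (1 : ℝ → ℝ) (x i) := by
      rw [hmax x]
      exact le_ciSup ⟨(n:ℝ), by rintro v ⟨θ, rfl⟩; exact hNle θ⟩ θ₀
    have hxmem : t < |that x - θ₀| := hx
    rcases lt_abs.mp hxmem with h | h
    · -- that x > θ₀ + t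
      rcases lt_or_ge (that x) (θ₀ + 99) with h99 | h99
      · -- conclude E2
        right; left
        have c1 : (∑ i, Set.indicator (Set.Icc (that x) (that x + 1)) (1 : ℝ → ℝ) (x i))
            ≤ ∑ i, Set.indicator (Set.Ioc (θ₀ + t) (θ₀ + 1)) (1 : ℝ → ℝ) (x i) := by
          apply Finset.sum_le_sum
          intro i _
          apply hmono
          intro hm
          rcases hΩ i with hI | hI
          · simp only [hI₁, Set.mem_Icc] at hI
            simp only [Set.mem_Icc] at hm
            simp only [Set.mem_Ioc]
            constructor <;> linarith [hm.1, hm.2, hI.1, hI.2]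
          · exfalso
            simp only [hI₂, Set.mem_Icc] at hI
            simp only [Set.mem_Icc] at hm
            linarith [hm.2, hI.1]
        have c2 : (∑ i, Set.indicator A₂ (1 : ℝ → ℝ) (x i))
              + (∑ i, Set.indicator (Set.Ioc (θ₀ + t) (θ₀ + 1)) (1 : ℝ → ℝ) (x i))
            ≤ ∑ i, Set.indicator I₁ (1 : ℝ → ℝ) (x i) := by
          rw [← Finset.sum_add_distrib]
          apply Finset.sum_le_sum
          intro i _
          apply hadd
          · intro hy
            simp only [hA₂, Set.mem_Ico] at hy
            simp only [hI₁, Set.mem_Icc]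
            constructor <;> linarith [hy.1, hy.2]
          · intro hy
            simp only [Set.mem_Ioc] at hy
            simp only [hI₁, Set.mem_Icc]
            constructor <;> linarith [hy.1, hy.2]
          · intro hy hz
            simp only [hA₂, Set.mem_Ico] at hy
            simp only [Set.mem_Ioc] at hz
            linarith [hy.2, hz.1]
        have hzero : (∑ i, Set.indicator A₂ (1 : ℝ → ℝ) (x i)) ≤ 0 := by linarith
        have hzero' : ∀ i ∈ Finset.univ, Set.indicator A₂ (1 : ℝ → ℝ) (x i) = 0 := by
          rw [← Finset.sum_eq_zero_iff_of_nonneg (fun i _ => hind_nonneg A₂ (x i))]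
          exact le_antisymm hzero (Finset.sum_nonneg fun i _ => hind_nonneg A₂ (x i))
        intro i _
        simp only [Set.mem_compl_iff]
        intro hmem
        have := hzero' i (Finset.mem_univ i)
        rw [hind, if_pos hmem] at this
        norm_num at this
      · -- conclude E1
        left
        have c1 : (∑ i, Set.indicator (Set.Icc (that x) (that x + 1)) (1 : ℝ → ℝ) (x i))
            ≤ ∑ i, Set.indicator I₁ᶜ (1 : ℝ → ℝ) (x i) := by
          apply Finset.sum_le_sum
          intro i _
          apply hmono
          intro hm
          simp only [Set.mem_Icc] at hm
          simp only [hI₁, Set.mem_compl_iff, Set.mem_Icc, not_and, not_le]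
          intro _
          linarith [hm.1]
        have c2 : (∑ i, Set.indicator I₁ (1 : ℝ → ℝ) (x i))
              + (∑ i, Set.indicator I₁ᶜ (1 : ℝ → ℝ) (x i)) = (n:ℝ) := by
          rw [← Finset.sum_add_distrib]
          have : ∀ i : Fin n, Set.indicator I₁ (1 : ℝ → ℝ) (x i)
              + Set.indicator I₁ᶜ (1 : ℝ → ℝ) (x i) = 1 := by
            intro i
            rw [hind, hind]
            by_cases hmem : x i ∈ I₁
            · rw [if_pos hmem, if_neg (by simp [hmem])]; norm_num
            · rw [if_neg hmem, if_pos (by simp [hmem])]; norm_num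
          simp only [this]
          simp
        show (n:ℝ) ≤ 2 * N x I₁ᶜ
        simp only [hN_def]
        linarith
    · -- that x < θ₀ - t ; conclude E3
      right; right
      have c1 : (∑ i, Set.indicator (Set.Icc (that x) (that x + 1)) (1 : ℝ → ℝ) (x i))
          ≤ ∑ i, Set.indicator (Set.Icc θ₀ (θ₀ + 1 - t)) (1 : ℝ → ℝ) (x i) := by
        apply Finset.sum_le_sum
        intro i _
        apply hmono
        intro hm
        rcases hΩ i with hI | hI
        · simp only [hI₁, Set.mem_Icc] at hI
          simp only [Set.mem_Icc] at hm
          simp only [Set.mem_Icc]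
          constructor <;> linarith [hm.1, hm.2, hI.1, hI.2]
        · exfalso
          simp only [hI₂, Set.mem_Icc] at hI
          simp only [Set.mem_Icc] at hm
          linarith [hm.2, hI.1]
      have c2 : (∑ i, Set.indicator (Set.Icc θ₀ (θ₀ + 1 - t)) (1 : ℝ → ℝ) (x i))
            + (∑ i, Set.indicator A₃ (1 : ℝ → ℝ) (x i))
          ≤ ∑ i, Set.indicator I₁ (1 : ℝ → ℝ) (x i) := by
        rw [← Finset.sum_add_distrib]
        apply Finset.sum_le_sum
        intro i _
        apply hadd
        · intro hy
          simp only [Set.mem_Icc] at hy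
          simp only [hI₁, Set.mem_Icc]
          constructor <;> linarith [hy.1, hy.2]
        · intro hy
          simp only [hA₃, Set.mem_Ioc] at hy
          simp only [hI₁, Set.mem_Icc]
          constructor <;> linarith [hy.1, hy.2]
        · intro hy hz
          simp only [Set.mem_Icc] at hy
          simp only [hA₃, Set.mem_Ioc] at hz
          linarith [hy.2, hz.1]
      have hzero : (∑ i, Set.indicator A₃ (1 : ℝ → ℝ) (x i)) ≤ 0 := by linarith
      have hzero' : ∀ i ∈ Finset.univ, Set.indicator A₃ (1 : ℝ → ℝ) (x i) = 0 := by
        rw [← Finset.sum_eq_zero_iff_of_nonneg (fun i _ => hind_nonneg A₃ (x i))]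
        exact le_antisymm hzero (Finset.sum_nonneg fun i _ => hind_nonneg A₃ (x i))
      intro i _
      simp only [Set.mem_compl_iff]
      intro hmem
      have := hzero' i (Finset.mem_univ i)
      rw [hind, if_pos hmem] at this
      norm_num at this
  -- measurability of basic sets
  have hI1m : MeasurableSet I₁ := measurableSet_Icc
  have hSm : MeasurableSet S := measurableSet_Icc.union measurableSet_Icc
  haveI : IsProbabilityMeasure P := by rw [hP_def]; infer_instance
  -- the complement of the support is null
  have hμS : μ S = 1 := by rw [hμ_def, hS, hI₁, hI₂]; exact mixUnif_union α θ₀ hα0 hα1'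
  have hPΩc : P Ω₀ᶜ = 0 := by
    have h1 : P Ω₀ = 1 := by
      rw [hP_def, hΩ₀, Measure.pi_pi]
      simp [hμS]
    rw [measure_compl (MeasurableSet.univ_pi fun _ => hSm) (measure_ne_top _ _), h1,
      measure_univ, tsub_self]
  -- bounds on E2 and E3
  have hreal2 : (1 - (1 - α) * t) ^ n ≤ Real.exp (-((1 - α) * c)) := by
    have h1 : 1 - (1 - α) * t ≤ Real.exp (-((1 - α) * t)) := by
      have := Real.add_one_le_exp (-((1 - α) * t)); linarith
    have h2 : (1 - (1 - α) * t) ^ n ≤ (Real.exp (-((1 - α) * t))) ^ n :=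
      pow_le_pow_left₀ (by nlinarith) h1 n
    calc (1 - (1 - α) * t) ^ n ≤ (Real.exp (-((1 - α) * t))) ^ n := h2
      _ = Real.exp ((n : ℕ) * (-((1 - α) * t))) := (Real.exp_nat_mul _ n).symm
      _ = Real.exp (-((1 - α) * c)) := by congr 1; rw [← htn]; ring
  have hPE2 : P E2 ≤ ENNReal.ofReal (Real.exp (-((1 - α) * c))) := by
    rw [hP_def, hE2, Measure.pi_pi]
    have : μ A₂ᶜ = ENNReal.ofReal (1 - (1 - α) * t) := by
      rw [hμ_def, hA₂]; exact mixUnif_Ico_compl hα0 hα1' ht0.le ht1.le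
    rw [this]
    simp only [Finset.prod_const, Finset.card_univ, Fintype.card_fin]
    rw [← ENNReal.ofReal_pow (by nlinarith)]
    exact ENNReal.ofReal_le_ofReal hreal2
  have hPE3 : P E3 ≤ ENNReal.ofReal (Real.exp (-((1 - α) * c))) := by
    rw [hP_def, hE3, Measure.pi_pi]
    have : μ A₃ᶜ = ENNReal.ofReal (1 - (1 - α) * t) := by
      rw [hμ_def, hA₃]; exact mixUnif_Ioc_compl hα0 hα1' ht0.le ht1.le
    rw [this]
    simp only [Finset.prod_const, Finset.card_univ, Fintype.card_fin]
    rw [← ENNReal.ofReal_pow (by nlinarith)]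
    exact ENNReal.ofReal_le_ofReal hreal2
  -- bound on E1
  have hPE1 : P E1 ≤ ENNReal.ofReal (Real.exp (-(n * (1 - 2*α) ^ 2) / 2)) := by
    rcases eq_or_lt_of_le hα0 with hα | hα
    · -- α = 0 : the event E1 is almost surely impossible
      have hμG : μ I₁ = 1 := by
        rw [hμ_def, hI₁, mixUnif_Icc α θ₀ hα0, ← hα]; norm_num
      have hsubE1 : E1 ⊆ (Set.pi Set.univ fun _ : Fin n => I₁)ᶜ := by
        intro x hx hmem
        have hall : ∀ i, x i ∈ I₁ := fun i => hmem i (Set.mem_univ i)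
        have hz : N x I₁ᶜ = 0 := Finset.sum_eq_zero fun i _ => by
          rw [hind, if_neg (by simp [hall i])]
        have hx' : (n:ℝ) ≤ 2 * N x I₁ᶜ := hx
        rw [hz] at hx'
        linarith
      calc P E1 ≤ P (Set.pi Set.univ fun _ : Fin n => I₁)ᶜ := measure_mono hsubE1
        _ = 0 := by
            rw [measure_compl (MeasurableSet.univ_pi fun _ => hI1m) (measure_ne_top _ _),
              measure_univ, hP_def, Measure.pi_pi]
            simp [hμG]
        _ ≤ _ := zero_le
    · -- 0 < α : Chernoff bound
      set R := ENNReal.ofReal ((1 - α) / α) with hR_def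
      have hbpos : (0:ℝ) < (1 - α) / α := div_pos (by linarith) hα
      have hb1 : (1:ℝ) ≤ (1 - α) / α := (one_le_div hα).mpr (by linarith)
      have hR1 : 1 ≤ R := by
        rw [hR_def, ← ENNReal.ofReal_one]; exact ENNReal.ofReal_le_ofReal hb1
      have hRtop : R ≠ ⊤ := ENNReal.ofReal_ne_top
      set f : ℝ → ℝ≥0∞ := fun y => if y ∈ I₁ then 1 else R with hf_def
      have hfmeas : Measurable f := Measurable.ite hI1m measurable_const measurable_const
      set ε := R ^ ((n:ℝ)/2) with hε_def
      have hε0 : ε ≠ 0 := ne_of_gt (ENNReal.rpow_pos (zero_lt_one.trans_le hR1) hRtop)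
      have hεtop : ε ≠ ⊤ := ENNReal.rpow_ne_top_of_nonneg (by positivity) hRtop
      have hsubE1 : E1 ⊆ {x | ε ≤ ∏ i, f (x i)} := by
        intro x hx
        have hx' : (n:ℝ) ≤ 2 * N x I₁ᶜ := hx
        have hNk : N x I₁ᶜ
            = ((Finset.univ.filter fun i : Fin n => x i ∉ I₁).card : ℝ) := by
          simp only [hN_def]
          have hcongr : (∑ i, Set.indicator I₁ᶜ (1 : ℝ → ℝ) (x i))
              = ∑ i, if x i ∉ I₁ then (1:ℝ) else 0 :=
            Finset.sum_congr rfl fun i _ => by rw [hind]; simp only [Set.mem_compl_iff]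
          rw [hcongr, Finset.sum_boole]
        have hprod : (∏ i, f (x i))
            = R ^ (Finset.univ.filter fun i : Fin n => x i ∉ I₁).card := by
          simp only [hf_def]
          rw [Finset.prod_ite, Finset.prod_const_one, one_mul, Finset.prod_const]
        show ε ≤ ∏ i, f (x i)
        rw [hprod, ← ENNReal.rpow_natCast R]
        apply ENNReal.rpow_le_rpow_of_exponent_le hR1
        rw [hNk] at hx'
        linarith
      have hmarkov := MeasureTheory.meas_ge_le_lintegral_div (μ := P)
        ((Finset.measurable_prod Finset.univ fun i _ =>
          hfmeas.comp (measurable_pi_apply i)).aemeasurable) hε0 hεtop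
      have hint : ∫⁻ x, ∏ i, f (x i) ∂P = (∫⁻ y, f y ∂μ) ^ n := by
        rw [hP_def]; exact lintegral_pi_prod_pow hfmeas n
      have hfint : ∫⁻ y, f y ∂μ = ENNReal.ofReal (2 * (1 - α)) := by
        have hfe : f = fun y => Set.indicator I₁ (fun _ => (1:ℝ≥0∞)) y
            + Set.indicator I₁ᶜ (fun _ => R) y := by
          funext y
          simp only [hf_def]
          by_cases hmem : y ∈ I₁
          · rw [if_pos hmem, Set.indicator_of_mem hmem,
              Set.indicator_of_notMem (by simp [hmem]), add_zero]
          · rw [if_neg hmem, Set.indicator_of_notMem hmem,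
              Set.indicator_of_mem (by simp [hmem]), zero_add]
        rw [hfe, lintegral_add_left (measurable_const.indicator hI1m),
          lintegral_indicator_const hI1m, lintegral_indicator_const hI1m.compl, one_mul]
        have h1 : μ I₁ = ENNReal.ofReal (1 - α) := by
          rw [hμ_def, hI₁]; exact mixUnif_Icc α θ₀ hα0
        have h2 : μ I₁ᶜ = ENNReal.ofReal α := by
          rw [hμ_def, hI₁]; exact mixUnif_Icc_compl α θ₀ hα1'
        rw [h1, h2, hR_def, ← ENNReal.ofReal_mul (by positivity),
          div_mul_cancel₀ _ (ne_of_gt hα), ← ENNReal.ofReal_add (by linarith) (by linarith)]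
        congr 1; ring
      have hrealE1 : (2 * (1 - α)) ^ n / ((1 - α) / α) ^ ((n:ℝ)/2)
          ≤ Real.exp (-(n * (1 - 2*α) ^ 2) / 2) := by
        have ha : (0:ℝ) ≤ 2 * (1 - α) := by linarith
        have e1 : (2 * (1 - α)) ^ n = ((2 * (1 - α)) ^ 2) ^ ((n:ℝ)/2) := by
          have h2 : ((2 * (1 - α)) ^ 2 : ℝ) = (2 * (1 - α)) ^ (2:ℝ) := by
            rw [← Real.rpow_natCast (2 * (1 - α)) 2]; norm_num
          rw [h2, ← Real.rpow_natCast (2 * (1 - α)) n, ← Real.rpow_mul ha]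
          congr 1
          push_cast; ring
        rw [e1, ← Real.div_rpow (sq_nonneg _) hbpos.le]
        have hin : (2 * (1 - α)) ^ 2 / ((1 - α) / α) = 4 * α * (1 - α) := by
          rw [div_div_eq_mul_div, sq]
          rw [div_eq_iff (by linarith : (1:ℝ) - α ≠ 0)]
          ring
        rw [hin]
        have hle : 4 * α * (1 - α) ≤ Real.exp (-(1 - 2*α) ^ 2) := by
          have := Real.add_one_le_exp (-(1 - 2*α) ^ 2)
          nlinarith
        calc (4 * α * (1 - α)) ^ ((n:ℝ)/2)
            ≤ (Real.exp (-(1 - 2*α) ^ 2)) ^ ((n:ℝ)/2) :=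
              Real.rpow_le_rpow (by nlinarith) hle (by positivity)
          _ = Real.exp ((-(1 - 2*α) ^ 2) * ((n:ℝ)/2)) := (Real.exp_mul _ _).symm
          _ = Real.exp (-(n * (1 - 2*α) ^ 2) / 2) := by congr 1; ring
      calc P E1 ≤ P {x | ε ≤ ∏ i, f (x i)} := measure_mono hsubE1
        _ ≤ (∫⁻ x, ∏ i, f (x i) ∂P) / ε := hmarkov
        _ = (ENNReal.ofReal (2 * (1 - α))) ^ n / R ^ ((n:ℝ)/2) := by rw [hint]; rw [hfint]
        _ = ENNReal.ofReal ((2 * (1 - α)) ^ n)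
            / ENNReal.ofReal (((1 - α) / α) ^ ((n:ℝ)/2)) := by
            rw [← ENNReal.ofReal_pow (by linarith), hR_def, ENNReal.ofReal_rpow_of_pos hbpos]
        _ = ENNReal.ofReal ((2 * (1 - α)) ^ n / ((1 - α) / α) ^ ((n:ℝ)/2)) :=
            (ENNReal.ofReal_div_of_pos (Real.rpow_pos_of_pos hbpos _)).symm
        _ ≤ ENNReal.ofReal (Real.exp (-(n * (1 - 2*α) ^ 2) / 2)) :=
            ENNReal.ofReal_le_ofReal hrealE1
  -- final assembly
  calc P {x | t < |that x - θ₀|}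
      ≤ P ((E1 ∪ (E2 ∪ E3)) ∪ Ω₀ᶜ) := by
        apply measure_mono
        intro x hx
        by_cases hΩ : x ∈ Ω₀
        · exact Or.inl (key ⟨hx, hΩ⟩)
        · exact Or.inr hΩ
    _ ≤ P (E1 ∪ (E2 ∪ E3)) + P Ω₀ᶜ := measure_union_le _ _
    _ = P (E1 ∪ (E2 ∪ E3)) := by rw [hPΩc, add_zero]
    _ ≤ P E1 + (P E2 + P E3) :=
        le_trans (measure_union_le _ _) (add_le_add le_rfl (measure_union_le _ _))
    _ ≤ ENNReal.ofReal (Real.exp (-(n * (1 - 2*α) ^ 2) / 2))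
          + (ENNReal.ofReal (Real.exp (-((1 - α) * c)))
            + ENNReal.ofReal (Real.exp (-((1 - α) * c)))) :=
        add_le_add hPE1 (add_le_add hPE2 hPE3)
    _ = ENNReal.ofReal (Real.exp (-(n * (1 - 2*α) ^ 2) / 2)
          + 2 * Real.exp (-((1 - α) * c))) := by
        rw [← ENNReal.ofReal_add (Real.exp_nonneg _) (Real.exp_nonneg _),
          ← ENNReal.ofReal_add (Real.exp_nonneg _) (by positivity)]
        congr 1; ring
end
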